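/- Define l(κ) := (1/κ) log(2E) + (2/κ) artanh(κ/λ⁺_min) for 0 < κ < λ⁺_min, where E ≥ 1 and 0 < λ⁺_min ≤ ∞. Then l attains a unique minimum at some σ ∈ (0, λ⁺_min), and the minimal value satisfies l(σ) ≥ (2 + log(2E))/λ⁺_min; in particular l(σ) > 2/λ⁺_min. -/

import Mathlib

/-- The inverse hyperbolic tangent, artanh x = (1/2) log((1+x)/(1-x)). -/
noncomputable def artanh (x : ℝ) : ℝ := (1/2) * Real.log ((1 + x) / (1 - x))

open Set


lemma hasDerivAt_artanh {x : ℝ} (h1 : -1 < x) (h2 : x < 1) :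
    HasDerivAt artanh (1 / (1 - x^2)) x := by
  have hp : 0 < 1 + x := by linarith
  have hm : 0 < 1 - x := by linarith
  have key : HasDerivAt (fun y : ℝ => (1/2) * (Real.log (1 + y) - Real.log (1 - y)))
      ((1/2) * (1/(1+x) - (-1)/(1-x))) x := by
    have hd1 : HasDerivAt (fun y : ℝ => Real.log (1 + y)) (1/(1+x)) x := by
      have := (Real.hasDerivAt_log hp.ne').comp x ((hasDerivAt_id x).const_add 1)
      simpa [one_div, Function.comp_def] using this
    have hd2 : HasDerivAt (fun y : ℝ => Real.log (1 - y)) ((-1)/(1-x)) x := by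
      have := (Real.hasDerivAt_log hm.ne').comp x ((hasDerivAt_id x).neg.const_add 1)
      simpa [one_div, div_eq_mul_inv, sub_eq_add_neg, Function.comp_def] using this
    exact (hd1.sub hd2).const_mul (1/2)
  have heq : artanh =ᶠ[nhds x] fun y : ℝ => (1/2) * (Real.log (1 + y) - Real.log (1 - y)) := by
    filter_upwards [Ioo_mem_nhds h1 h2] with y hy
    have : (0:ℝ) < 1 + y := by linarith [hy.1]
    have : (0:ℝ) < 1 - y := by linarith [hy.2]
    unfold artanh
    rw [Real.log_div (by linarith [hy.1]) (by linarith [hy.2])]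
  have : HasDerivAt artanh ((1/2) * (1/(1+x) - (-1)/(1-x))) x :=
    key.congr_of_eventuallyEq heq
  convert this using 1
  have hne : (1 - x^2) ≠ 0 := by nlinarith
  field_simp
  ring

lemma artanh_zero : artanh 0 = 0 := by simp [artanh]

lemma continuousOn_artanh : ContinuousOn artanh (Ioo (-1 : ℝ) 1) := fun x hx =>
  ((hasDerivAt_artanh hx.1 hx.2).differentiableAt).continuousAt.continuousWithinAt

lemma lt_artanh {t : ℝ} (h0 : 0 < t) (h1 : t < 1) : t < artanh t := by
  have hmono : StrictMonoOn (fun y => artanh y - y) (Ico (0:ℝ) 1) := by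
    apply strictMonoOn_of_deriv_pos (convex_Ico 0 1)
    · apply ContinuousOn.sub _ continuousOn_id
      exact continuousOn_artanh.mono (fun y hy => ⟨by linarith [hy.1], hy.2⟩)
    · intro x hx
      rw [interior_Ico] at hx
      have hd : HasDerivAt (fun y => artanh y - y) (1/(1-x^2) - 1) x :=
        (hasDerivAt_artanh (by linarith [hx.1]) hx.2).sub (hasDerivAt_id x)
      rw [hd.deriv]
      have h2 : 0 < 1 - x^2 := by nlinarith [hx.1, hx.2]
      rw [sub_pos, lt_div_iff₀ h2]
      nlinarith [hx.1]
  have := hmono (left_mem_Ico.2 one_pos) (⟨h0.le, h1⟩ : t ∈ Ico (0:ℝ) 1) h0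
  simpa [artanh_zero] using this

lemma artanh_nonneg {t : ℝ} (h0 : 0 ≤ t) (h1 : t < 1) : 0 ≤ artanh t := by
  rcases eq_or_lt_of_le h0 with h | h
  · simp [← h, artanh_zero]
  · linarith [lt_artanh h h1]

noncomputable def phi (c t : ℝ) : ℝ := 2*t/(1-t^2) - c - 2*artanh t

lemma hasDerivAt_phi (c : ℝ) {x : ℝ} (h1 : -1 < x) (h2 : x < 1) :
    HasDerivAt (phi c) (4*x^2/(1-x^2)^2) x := by
  have hne : (1 - x^2) ≠ 0 := by nlinarith
  have hd1 : HasDerivAt (fun y : ℝ => 2*y/(1-y^2))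
      ((2*(1-x^2) - 2*x*(-(2*x)))/(1-x^2)^2) x := by
    apply HasDerivAt.div
    · simpa using (hasDerivAt_id x).const_mul 2
    · have : HasDerivAt (fun y : ℝ => 1 - y^2) (-(2*x)) x := by
        simpa using ((hasDerivAt_pow 2 x).const_sub 1)
      simpa using this
    · exact hne
  have hd : HasDerivAt (phi c)
      ((2*(1-x^2) - 2*x*(-(2*x)))/(1-x^2)^2 - 2 * (1/(1-x^2))) x :=
    (hd1.sub_const c).sub ((hasDerivAt_artanh h1 h2).const_mul 2)
  convert hd using 1
  field_simp
  ring

lemma continuousOn_phi (c : ℝ) : ContinuousOn (phi c) (Ioo (-1 : ℝ) 1) := fun x hx =>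
  ((hasDerivAt_phi c hx.1 hx.2).differentiableAt).continuousAt.continuousWithinAt

lemma strictMonoOn_phi (c : ℝ) : StrictMonoOn (phi c) (Ioo (0:ℝ) 1) := by
  apply strictMonoOn_of_deriv_pos (convex_Ioo 0 1)
  · exact (continuousOn_phi c).mono (fun y hy => ⟨by linarith [hy.1], hy.2⟩)
  · intro x hx
    rw [interior_Ioo] at hx
    rw [(hasDerivAt_phi c (by linarith [hx.1]) hx.2).deriv]
    have h2 : 0 < 1 - x^2 := by nlinarith [hx.1, hx.2]
    have hx0 : 0 < x := hx.1
    positivity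


lemma artanh_le_sqrt {b : ℝ} (h0 : 0 ≤ b) (h1 : b < 1) :
    artanh b ≤ Real.sqrt ((1+b)/(1-b)) := by
  have hq : 0 < (1+b)/(1-b) := div_pos (by linarith) (by linarith)
  unfold artanh
  have h2 : Real.log ((1+b)/(1-b)) = 2 * Real.log (Real.sqrt ((1+b)/(1-b))) := by
    rw [Real.log_sqrt hq.le]; ring
  rw [h2]
  have h3 := Real.log_le_sub_one_of_pos (Real.sqrt_pos.2 hq)
  nlinarith [Real.sqrt_nonneg ((1+b)/(1-b))]

lemma exists_root (c : ℝ) (hc : 0 < c) : ∃ t₀ ∈ Ioo (0:ℝ) 1, phi c t₀ = 0 := by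
  set a := min (1/2 : ℝ) (c/4) with ha_def
  have ha0 : 0 < a := lt_min (by norm_num) (by linarith)
  have ha1 : a ≤ 1/2 := min_le_left _ _
  have hac : a ≤ c/4 := min_le_right _ _
  have hphia : phi c a < 0 := by
    have hart := artanh_nonneg ha0.le (by linarith : a < 1)
    have hden : (3:ℝ)/4 ≤ 1 - a^2 := by nlinarith
    have h1 : 2*a/(1-a^2) ≤ 8*a/3 := by
      rw [div_le_div_iff₀ (by linarith) (by norm_num)]
      nlinarith
    unfold phi; linarith
  set r := min (1/12 : ℝ) (1/(2*(c+1))) with hr_def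
  have hr0 : 0 < r := lt_min (by norm_num) (by positivity)
  have hr12 : r ≤ 1/12 := min_le_left _ _
  have hrc : (c+1) * (2*r) ≤ 1 := by
    have h := min_le_right (1/12 : ℝ) (1/(2*(c+1)))
    have hcp : 0 < 2*(c+1) := by linarith
    calc (c+1) * (2*r) ≤ (c+1) * (2 * (1/(2*(c+1)))) := by
          apply mul_le_mul_of_nonneg_left (by linarith) (by linarith)
      _ = 1 := by field_simp
  set b := 1 - r^2 with hb_def
  have hb2 : 1/2 < b := by nlinarith
  have hb1 : b < 1 := by nlinarith
  have hphib : 0 < phi c b := by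
    have hart : artanh b * r ≤ 3/2 := by
      have h1 : artanh b ≤ Real.sqrt ((1+b)/(1-b)) := artanh_le_sqrt (by linarith) hb1
      have h2 : Real.sqrt ((1+b)/(1-b)) ≤ Real.sqrt (2/r^2) := by
        apply Real.sqrt_le_sqrt
        rw [div_le_div_iff₀ (by nlinarith) (by positivity)]
        nlinarith
      have h3 : Real.sqrt (2/r^2) = Real.sqrt 2 / r := by
        rw [Real.sqrt_div (by norm_num : (0:ℝ) ≤ 2), Real.sqrt_sq hr0.le]
      have hs2 : Real.sqrt 2 ≤ 3/2 := by
        nlinarith [Real.sq_sqrt (by norm_num : (0:ℝ) ≤ 2), Real.sqrt_nonneg 2]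
      have h4 : artanh b ≤ Real.sqrt 2 / r := by rw [← h3]; linarith
      calc artanh b * r ≤ (Real.sqrt 2 / r) * r := by
            apply mul_le_mul_of_nonneg_right h4 hr0.le
        _ = Real.sqrt 2 := by field_simp
        _ ≤ 3/2 := hs2
    have hA : 1/(2*r^2) ≤ 2*b/(1-b^2) := by
      rw [div_le_div_iff₀ (by positivity) (by nlinarith)]
      nlinarith
    have hC : c ≤ 1/(2*r) - 1 := by
      rw [le_sub_iff_add_le, le_div_iff₀ (by linarith)]
      linarith [hrc]
    have hB : 2 * artanh b ≤ 3/r := by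
      rw [le_div_iff₀ hr0]; linarith
    have hkey : 1/(2*r) - 1 + 3/r < 1/(2*r^2) := by
      have hdiff : 1/(2*r^2) - (1/(2*r) - 1 + 3/r) = (1 - 7*r + 2*r^2)/(2*r^2) := by
        field_simp; ring
      have hpos : (0:ℝ) < (1 - 7*r + 2*r^2)/(2*r^2) :=
        div_pos (by nlinarith) (by positivity)
      linarith
    unfold phi
    have := hA
    linarith [hA, hB, hC, hkey]
  have hab : a < b := by linarith
  have hcont : ContinuousOn (phi c) (Icc a b) :=
    (continuousOn_phi c).mono (fun y hy => ⟨by linarith [hy.1], by linarith [hy.2]⟩)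
  have hsub := intermediate_value_Ioo hab.le hcont
  have h0mem : (0:ℝ) ∈ Ioo (phi c a) (phi c b) := ⟨hphia, hphib⟩
  obtain ⟨t₀, ht₀, hroot⟩ := hsub h0mem
  exact ⟨t₀, ⟨by linarith [ht₀.1], by linarith [ht₀.2]⟩, hroot⟩


noncomputable def ff (c t : ℝ) : ℝ := (c + 2 * artanh t) / t

lemma hasDerivAt_ff (c : ℝ) {x : ℝ} (h0 : 0 < x) (h1 : x < 1) :
    HasDerivAt (ff c) (phi c x / x^2) x := by
  have hd : HasDerivAt (ff c) ((2 * (1/(1-x^2)) * x - (c + 2 * artanh x) * 1) / x^2) x := by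
    apply HasDerivAt.div _ (hasDerivAt_id x) h0.ne'
    exact ((hasDerivAt_artanh (by linarith) h1).const_mul 2).const_add c
  convert hd using 1
  have hne : (1 - x^2) ≠ 0 := by nlinarith
  unfold phi
  field_simp
  ring

lemma ff_lower (c : ℝ) (hc : 0 < c) {t : ℝ} (h0 : 0 < t) (h1 : t < 1) :
    c + 2 ≤ ff c t := by
  rw [ff, le_div_iff₀ h0]
  nlinarith [lt_artanh h0 h1]

lemma main_t (c : ℝ) (hc : 0 < c) :
    ∃ τ ∈ Ioo (0:ℝ) 1, ∀ t ∈ Ioo (0:ℝ) 1, t ≠ τ → ff c τ < ff c t := by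
  obtain ⟨τ, hτ, hroot⟩ := exists_root c hc
  refine ⟨τ, hτ, fun t ht hne => ?_⟩
  have hcont : ContinuousOn (ff c) (Ioo (0:ℝ) 1) := fun y hy =>
    ((hasDerivAt_ff c hy.1 hy.2).differentiableAt).continuousAt.continuousWithinAt
  rcases lt_or_gt_of_ne hne with hlt | hgt
  · -- t < τ : ff strictly anti on Ioc 0 τ
    have hanti : StrictAntiOn (ff c) (Ioc (0:ℝ) τ) := by
      apply strictAntiOn_of_deriv_neg (convex_Ioc 0 τ)
      · exact hcont.mono (fun y hy => ⟨hy.1, lt_of_le_of_lt hy.2 hτ.2⟩)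
      · intro x hx
        rw [interior_Ioc] at hx
        rw [(hasDerivAt_ff c hx.1 (lt_trans hx.2 hτ.2)).deriv]
        have hneg : phi c x < 0 := by
          have := strictMonoOn_phi c ⟨hx.1, lt_trans hx.2 hτ.2⟩ hτ hx.2
          linarith [hroot]
        exact div_neg_of_neg_of_pos hneg (by nlinarith [hx.1])
    exact hanti ⟨ht.1, hlt.le⟩ ⟨hτ.1, le_refl τ⟩ hlt
  · -- τ < t : ff strictly mono on Ico τ 1
    have hmono : StrictMonoOn (ff c) (Ico τ 1) := by
      apply strictMonoOn_of_deriv_pos (convex_Ico τ 1)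
      · exact hcont.mono (fun y hy => ⟨lt_of_lt_of_le hτ.1 hy.1, hy.2⟩)
      · intro x hx
        rw [interior_Ico] at hx
        rw [(hasDerivAt_ff c (lt_trans hτ.1 hx.1) hx.2).deriv]
        have hpos : 0 < phi c x := by
          have := strictMonoOn_phi c hτ ⟨lt_trans hτ.1 hx.1, hx.2⟩ hx.1
          linarith [hroot]
        exact div_pos hpos (by nlinarith [lt_trans hτ.1 hx.1])
    exact hmono ⟨le_refl τ, hτ.2⟩ ⟨hgt.le, ht.2⟩ hgt


/-- the function l(κ) = (1/κ)log(2E) + (2/κ)artanh(κ/λ⁺_min) on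
(0, λ⁺_min) attains a unique minimum at some σ ∈ (0, λ⁺_min), and the minimal
value satisfies l(σ) ≥ (2 + log(2E))/λ⁺_min > 2/λ⁺_min. -/
theorem stmt_19 (E : ℕ) (hE : 1 ≤ E) (lp : ℝ) (hlp : 0 < lp) :
    ∃ σ ∈ Set.Ioo (0 : ℝ) lp,
      (∀ κ ∈ Set.Ioo (0 : ℝ) lp,
        (1/σ) * Real.log (2*E) + (2/σ) * artanh (σ/lp) ≤
          (1/κ) * Real.log (2*E) + (2/κ) * artanh (κ/lp)) ∧
      (∀ κ ∈ Set.Ioo (0 : ℝ) lp,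
        (1/κ) * Real.log (2*E) + (2/κ) * artanh (κ/lp) =
          (1/σ) * Real.log (2*E) + (2/σ) * artanh (σ/lp) → κ = σ) ∧
      (2 + Real.log (2*E)) / lp ≤ (1/σ) * Real.log (2*E) + (2/σ) * artanh (σ/lp) ∧
      2 / lp < (1/σ) * Real.log (2*E) + (2/σ) * artanh (σ/lp) := by
  set c := Real.log (2*E) with hc_def
  have hE1 : (1:ℝ) ≤ (E:ℝ) := by exact_mod_cast hE
  have hc : 0 < c := Real.log_pos (by linarith)
  obtain ⟨τ, ⟨hτ0, hτ1⟩, hmin⟩ := main_t c hc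
  have hτpos : 0 < lp * τ := by positivity
  have hσlp : lp * τ / lp = τ := by field_simp
  have hexpr : ∀ κ : ℝ, 0 < κ →
      (1/κ) * c + (2/κ) * artanh (κ/lp) = ff c (κ/lp) / lp := by
    intro κ hκ
    unfold ff
    field_simp
  refine ⟨lp * τ, ⟨hτpos, by nlinarith⟩, ?_, ?_, ?_, ?_⟩
  · intro κ hκ
    have hmem : κ/lp ∈ Ioo (0:ℝ) 1 := ⟨div_pos hκ.1 hlp, (div_lt_one hlp).2 hκ.2⟩
    rw [hexpr κ hκ.1, hexpr (lp*τ) hτpos, hσlp]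
    rcases eq_or_ne (κ/lp) τ with heq | hne
    · rw [heq]
    · exact div_le_div_of_nonneg_right ((hmin _ hmem hne).le) hlp.le
  · intro κ hκ heq
    rw [hexpr κ hκ.1, hexpr (lp*τ) hτpos, hσlp] at heq
    by_contra hne
    have hmem : κ/lp ∈ Ioo (0:ℝ) 1 := ⟨div_pos hκ.1 hlp, (div_lt_one hlp).2 hκ.2⟩
    have hne' : κ/lp ≠ τ := by
      intro h
      apply hne
      field_simp at h
      linarith [h]
    have := hmin _ hmem hne'
    have heq2 : ff c (κ/lp) = ff c τ := by
      field_simp at heq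
      exact heq
    linarith
  · rw [hexpr (lp*τ) hτpos, hσlp]
    have := ff_lower c hc hτ0 hτ1
    rw [div_le_div_iff₀ hlp hlp]
    nlinarith
  · rw [hexpr (lp*τ) hτpos, hσlp]
    have := ff_lower c hc hτ0 hτ1
    rw [div_lt_div_iff₀ hlp hlp]
    nlinarith
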